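/- Let g, m, x, v ∈ ℝ^d with v > 0 entrywise, and let λ ≥ 0. Then ⟨g + λm, −m/√v − λx⟩ + ⟨m/√v + λx, g − m⟩ + ⟨−m²/(4v^{3/2}), g² − v⟩ = −(λ + 3/4)‖m²/√v‖₁ − λ(λ + 1)⟨m, x⟩ − (1/4)‖m² ⊙ g²/v^{3/2}‖₁. (This computes the derivative of H(x,m,v) = f(x) + ‖m²/(2√v)‖₁ + λ⟨m, x⟩ along the simplified continuous-time AdamW dynamics ẋ = −m/√v − λx, ṁ = ∇f(x) − m, v̇ = ∇f(x)² − v, with g = ∇f(x), exhibiting the sign-indefinite term −λ(λ+1)⟨m, x⟩.) -/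
import Mathlib

/-- derivative identity for the candidate Lyapunov function of the
simplified continuous-time AdamW dynamics, exhibiting the sign-indefinite term
`-λ(λ+1)⟨m, x⟩`. -/
theorem adamw_lyapunov_derivative_identity {d : ℕ} (g m x v : Fin d → ℝ)
    (hv : ∀ i, 0 < v i) (lam : ℝ) (hlam : 0 ≤ lam) :
    (∑ i, (g i + lam * m i) * (-(m i / Real.sqrt (v i)) - lam * x i))
        + (∑ i, (m i / Real.sqrt (v i) + lam * x i) * (g i - m i))
        + (∑ i, (-(m i ^ 2) / (4 * (v i * Real.sqrt (v i)))) * ((g i) ^ 2 - v i))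
      = -(lam + 3 / 4) * (∑ i, (m i) ^ 2 / Real.sqrt (v i))
          - lam * (lam + 1) * (∑ i, m i * x i)
          - (1 / 4) * (∑ i, (m i) ^ 2 * (g i) ^ 2 / (v i * Real.sqrt (v i))) := by
  simp only [Finset.mul_sum, ← Finset.sum_add_distrib, ← Finset.sum_sub_distrib]
  apply Finset.sum_congr rfl
  intro i _
  have hs : 0 < Real.sqrt (v i) := Real.sqrt_pos.mpr (hv i)
  have hvi := (hv i).ne'
  have hsq : Real.sqrt (v i) * Real.sqrt (v i) = v i := Real.mul_self_sqrt (hv i).le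
  field_simp
  nlinarith [hsq, sq_nonneg (m i), hs]
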